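/- In the square case β = 1: min over λ > 2 of max over x > 0 of M_λ(x) equals 3, where M_λ(x) = x² for 0 < x < x*(λ) and M_λ(x) = 2 + 3/x² for x ≥ x*(λ), with x*(λ) = (λ+√(λ²−4))/2; and the minimizing λ is 4/√3. -/

import Mathlib

/-- Square case minimax: min over λ > 2 of the worst-case AMSE sup_{x>0} M_λ(x)
equals 3, and is attained at λ = 4/√3. -/
theorem minimax_amse_square
    (xstar : ℝ → ℝ)
    (hxstar : ∀ lam : ℝ, xstar lam = (lam + Real.sqrt (lam ^ 2 - 4)) / 2)
    (M : ℝ → ℝ → ℝ)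
    (hM : ∀ lam x : ℝ, M lam x = if x < xstar lam then x ^ 2 else 2 + 3 / x ^ 2) :
    (∀ lam : ℝ, 2 < lam → 3 ≤ sSup {y : ℝ | ∃ x > 0, y = M lam x}) ∧
    ((2 : ℝ) < 4 / Real.sqrt 3 ∧
      sSup {y : ℝ | ∃ x > 0, y = M (4 / Real.sqrt 3) x} = 3) := by
  have h3 : (Real.sqrt 3) ^ 2 = 3 := Real.sq_sqrt (by norm_num)
  have h3pos : 0 < Real.sqrt 3 := Real.sqrt_pos.mpr (by norm_num)
  constructor
  · intro lam hlam
    have hs2 : xstar lam = (lam + Real.sqrt (lam ^ 2 - 4)) / 2 := hxstar lam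
    set s := xstar lam with hs
    have hsq : 0 ≤ Real.sqrt (lam ^ 2 - 4) := Real.sqrt_nonneg _
    have hspos : 0 < s := by rw [hs2]; linarith
    have hbdd : BddAbove {y : ℝ | ∃ x > 0, y = M lam x} := by
      refine ⟨max (s ^ 2) (2 + 3 / s ^ 2), ?_⟩
      rintro y ⟨x, hx, rfl⟩
      rw [hM]
      split_ifs with h
      · exact le_max_of_le_left (by nlinarith)
      · refine le_max_of_le_right ?_
        have hxs : s ≤ x := not_lt.mp h
        have hle : s ^ 2 ≤ x ^ 2 := by nlinarith
        have h1 : 3 / x ^ 2 ≤ 3 / s ^ 2 :=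
          div_le_div_of_nonneg_left (by norm_num) (by positivity) hle
        linarith
    by_cases hcase : s ^ 2 ≤ 3
    · have hmem : (2 + 3 / s ^ 2) ∈ {y : ℝ | ∃ x > 0, y = M lam x} :=
        ⟨s, hspos, by rw [hM, ← hs]; simp⟩
      have hge : (3 : ℝ) ≤ 2 + 3 / s ^ 2 := by
        have h1 : (1 : ℝ) ≤ 3 / s ^ 2 := by
          rw [le_div_iff₀ (by positivity)]; linarith
        linarith
      exact hge.trans (le_csSup hbdd hmem)
    · push_neg at hcase
      have hlt : Real.sqrt 3 < s := by nlinarith [Real.sqrt_nonneg 3]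
      have hmem : (3 : ℝ) ∈ {y : ℝ | ∃ x > 0, y = M lam x} :=
        ⟨Real.sqrt 3, h3pos, by rw [hM, if_pos hlt, h3]⟩
      exact le_csSup hbdd hmem
  · have hlam2 : (2 : ℝ) < 4 / Real.sqrt 3 := by
      rw [lt_div_iff₀ h3pos]; nlinarith
    refine ⟨hlam2, ?_⟩
    have hsqrt : Real.sqrt ((4 / Real.sqrt 3) ^ 2 - 4) = 2 / Real.sqrt 3 := by
      have : (4 / Real.sqrt 3) ^ 2 - 4 = (2 / Real.sqrt 3) ^ 2 := by
        field_simp; nlinarith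
      rw [this, Real.sqrt_sq (by positivity)]
    have hxs : xstar (4 / Real.sqrt 3) = Real.sqrt 3 := by
      rw [hxstar, hsqrt]
      field_simp
      nlinarith
    have hmem : (3 : ℝ) ∈ {y : ℝ | ∃ x > 0, y = M (4 / Real.sqrt 3) x} := by
      refine ⟨Real.sqrt 3, h3pos, ?_⟩
      rw [hM, hxs, if_neg (lt_irrefl _), h3]
      norm_num
    have hub : ∀ y ∈ {y : ℝ | ∃ x > 0, y = M (4 / Real.sqrt 3) x}, y ≤ 3 := by
      rintro y ⟨x, hx, rfl⟩
      rw [hM, hxs]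
      split_ifs with h
      · nlinarith
      · have hxs3 : Real.sqrt 3 ≤ x := not_lt.mp h
        have hle : (3 : ℝ) ≤ x ^ 2 := by nlinarith
        have h1 : 3 / x ^ 2 ≤ 1 := by
          rw [div_le_one (by positivity)]; linarith
        linarith
    exact le_antisymm (csSup_le ⟨3, hmem⟩ hub) (le_csSup ⟨3, hub⟩ hmem)
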